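/- Let Ω be a verification operator on C^d ⊗ C^d satisfying 0 ≤ Ω ≤ I and Tr[Ω Φ_+] = 1 (so Φ_+ is in the eigenspace of Ω with eigenvalue 1). Let β(Ω) denote the second largest eigenvalue of Ω and ν(Ω) = 1 − β(Ω) its spectral gap. Then for every state ρ on C^d ⊗ C^d with Tr[Φ_+ ρ] ≤ 1 − ε (where 0 ≤ ε ≤ 1), it holds that Tr[Ω ρ] ≤ 1 − ν(Ω)·ε. -/

import Mathlib

open Matrix
open scoped ComplexOrder

/-- The maximally entangled state `|Φ₊⟩ = (1/√d) ∑ |jj⟩` as a vector. -/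
noncomputable def bellPlus (d : ℕ) : Fin d × Fin d → ℂ :=
  fun p => if p.1 = p.2 then (1 / Real.sqrt d : ℝ) else 0

/-- The projector onto the maximally entangled state. -/
noncomputable def bellProj (d : ℕ) : Matrix (Fin d × Fin d) (Fin d × Fin d) ℂ :=
  Matrix.vecMulVec (bellPlus d) (star (bellPlus d))


lemma bell_norm {d : ℕ} (hd : 0 < d) : star (bellPlus d) ⬝ᵥ bellPlus d = 1 := by
  have hd' : (d : ℝ) ≠ 0 := Nat.cast_ne_zero.mpr hd.ne'
  simp only [dotProduct, Pi.star_apply, bellPlus, Fintype.sum_prod_type]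
  simp only [apply_ite (star : ℂ → ℂ), star_zero, Complex.star_def, Complex.conj_ofReal,
    ite_mul, zero_mul, mul_ite, mul_zero, Finset.sum_ite_eq, Finset.mem_univ, if_true]
  rw [Finset.sum_const]
  rw [← Complex.ofReal_mul]
  have : (1 / Real.sqrt d) * (1 / Real.sqrt d) = 1 / d := by
    rw [div_mul_div_comm, one_mul, Real.mul_self_sqrt (Nat.cast_nonneg d)]
  rw [this]
  simp [Finset.card_univ, hd']
  field_simp

lemma trace_mul_bellProj {d : ℕ} (A : Matrix (Fin d × Fin d) (Fin d × Fin d) ℂ) :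
    (A * bellProj d).trace = star (bellPlus d) ⬝ᵥ A *ᵥ bellPlus d := by
  simp only [bellProj, trace, diag_apply, mul_apply, vecMulVec_apply, dotProduct, mulVec,
    Pi.star_apply, Finset.mul_sum]
  exact Finset.sum_congr rfl fun i _ => Finset.sum_congr rfl fun j _ => by ring

lemma bellProj_mulVec {d : ℕ} (y : Fin d × Fin d → ℂ) :
    bellProj d *ᵥ y = (star (bellPlus d) ⬝ᵥ y) • bellPlus d := by
  funext i
  simp only [bellProj, mulVec, vecMulVec_apply, dotProduct, Pi.smul_apply, smul_eq_mul,
    Finset.sum_mul, Finset.mul_sum]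
  exact Finset.sum_congr rfl fun j _ => by ring

lemma bellProj_isHermitian (d : ℕ) : (bellProj d).IsHermitian := by
  ext i j
  simp only [bellProj, conjTranspose_apply, vecMulVec_apply, Pi.star_apply, star_mul', star_star]
  ring

lemma trace_mul_re_nonneg {n : Type*} [Fintype n] [DecidableEq n]
    {A B : Matrix n n ℂ} (hA : A.PosSemidef) (hB : B.PosSemidef) :
    0 ≤ ((A * B).trace).re := by
  open scoped MatrixOrder Matrix.Norms.L2Operator in
  obtain ⟨P, hP⟩ := CStarAlgebra.nonneg_iff_eq_star_mul_self.mp hA.nonneg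
  open scoped MatrixOrder Matrix.Norms.L2Operator in
  obtain ⟨Q, hQ⟩ := CStarAlgebra.nonneg_iff_eq_star_mul_self.mp hB.nonneg
  rw [star_eq_conjTranspose] at hP hQ
  subst hP hQ
  have h : (Pᴴ * P * (Qᴴ * Q)).trace = ((P * Qᴴ)ᴴ * (P * Qᴴ)).trace := by
    rw [show Pᴴ * P * (Qᴴ * Q) = (Pᴴ * P * Qᴴ) * Q from by simp [Matrix.mul_assoc],
      trace_mul_comm, conjTranspose_mul, conjTranspose_conjTranspose]
    simp [Matrix.mul_assoc]
  rw [h, trace, Complex.re_sum]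
  refine Finset.sum_nonneg fun i _ => ?_
  have he : (((P * Qᴴ)ᴴ * (P * Qᴴ)).diag i) =
      star (fun j => (P * Qᴴ) j i) ⬝ᵥ (fun j => (P * Qᴴ) j i) := by
    simp only [diag_apply, mul_apply, dotProduct, conjTranspose_apply, Pi.star_apply,
      Complex.star_def]
  rw [he]
  have h2 := dotProduct_star_self_nonneg (fun j => (P * Qᴴ) j i)
  rw [Complex.le_def] at h2
  simpa using h2.1

/-- for a verification operator `0 ≤ Ω ≤ I` with `Tr[Ω Φ₊] = 1` and
second largest eigenvalue (at most) `β`, every state `ρ` with `Tr[Φ₊ ρ] ≤ 1 − ε`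
satisfies `Tr[Ω ρ] ≤ 1 − (1 − β)ε`. -/
theorem verification_operator_bound (d : ℕ) (hd : 2 ≤ d)
    (Ω : Matrix (Fin d × Fin d) (Fin d × Fin d) ℂ) (β ε : ℝ)
    (hΩpos : Ω.PosSemidef) (hΩle : ((1 : Matrix (Fin d × Fin d) (Fin d × Fin d) ℂ) - Ω).PosSemidef)
    (hΩtr : (Ω * bellProj d).trace = 1)
    (hβ : ∀ x : Fin d × Fin d → ℂ, star (bellPlus d) ⬝ᵥ x = 0 →
      (star x ⬝ᵥ Ω.mulVec x).re ≤ β * (star x ⬝ᵥ x).re)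
    (ρ : Matrix (Fin d × Fin d) (Fin d × Fin d) ℂ)
    (hρ : ρ.PosSemidef) (hρtr : ρ.trace = 1)
    (hfid : ((bellProj d * ρ).trace).re ≤ 1 - ε)
    (hε0 : 0 ≤ ε) (hε1 : ε ≤ 1) :
    ((Ω * ρ).trace).re ≤ 1 - (1 - β) * ε := by
  have hd0 : 0 < d := by omega
  have hu : star (bellPlus d) ⬝ᵥ bellPlus d = 1 := bell_norm hd0
  have hΩu : Ω *ᵥ bellPlus d = bellPlus d := by
    have h1 : star (bellPlus d) ⬝ᵥ ((1 - Ω) *ᵥ bellPlus d) = 0 := by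
      rw [sub_mulVec, one_mulVec, dotProduct_sub, hu, ← trace_mul_bellProj Ω, hΩtr, sub_self]
    have h2 := (hΩle.dotProduct_mulVec_zero_iff (bellPlus d)).mp h1
    rw [sub_mulVec, one_mulVec, sub_eq_zero] at h2
    exact h2.symm
  have hvm : star (bellPlus d) ᵥ* Ω = star (bellPlus d) := by
    conv_lhs => rw [← hΩpos.1]
    rw [← star_mulVec, hΩu]
  have htr1 : ((Ω * ρ).trace).re ≤ 1 := by
    have h0 := trace_mul_re_nonneg hΩle hρ
    rw [sub_mul, one_mul, trace_sub, hρtr, Complex.sub_re, Complex.one_re] at h0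
    linarith
  rcases le_or_gt β 1 with hβ1 | hβ1
  · set M : Matrix (Fin d × Fin d) (Fin d × Fin d) ℂ :=
      (β : ℂ) • 1 + ((1 - β : ℝ) : ℂ) • bellProj d - Ω with hM_def
    have hMherm : M.IsHermitian := by
      have hP := bellProj_isHermitian d
      have hΩh := hΩpos.1
      unfold Matrix.IsHermitian at hP hΩh ⊢
      rw [hM_def, conjTranspose_sub, conjTranspose_add, conjTranspose_smul, conjTranspose_smul,
        conjTranspose_one, hP, hΩh, Complex.star_def, Complex.conj_ofReal, Complex.conj_ofReal]
    have hMpsd : M.PosSemidef := by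
      refine .of_dotProduct_mulVec_nonneg hMherm fun y => ?_
      obtain ⟨c, hc⟩ : ∃ c, c = star (bellPlus d) ⬝ᵥ y := ⟨_, rfl⟩
      obtain ⟨x, hxy⟩ : ∃ x, y = x + c • bellPlus d :=
        ⟨y - c • bellPlus d, by rw [sub_add_cancel]⟩
      have hxu : star (bellPlus d) ⬝ᵥ x = 0 := by
        have h := hc
        rw [hxy, dotProduct_add, dotProduct_smul, hu, smul_eq_mul, mul_one] at h
        linear_combination -h
      have hux : star x ⬝ᵥ bellPlus d = 0 := by
        rw [star_dotProduct, hxu, star_zero]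
      have hcross : star (bellPlus d) ⬝ᵥ (Ω *ᵥ x) = 0 := by
        rw [dotProduct_mulVec, hvm, hxu]
      have E1 : star y ⬝ᵥ y = star x ⬝ᵥ x + star c * c := by
        rw [hxy, star_add, star_smul]
        simp only [add_dotProduct, dotProduct_add, smul_dotProduct, dotProduct_smul,
          smul_eq_mul, hxu, hux, hu, Pi.star_apply]
        ring
      have E2 : star y ⬝ᵥ (Ω *ᵥ y) = star x ⬝ᵥ (Ω *ᵥ x) + star c * c := by
        rw [hxy, mulVec_add, mulVec_smul, hΩu, star_add, star_smul]
        simp only [add_dotProduct, dotProduct_add, smul_dotProduct, dotProduct_smul,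
          smul_eq_mul, hcross, hux, hu]
        ring
      have E3 : star y ⬝ᵥ (bellProj d *ᵥ y) = star c * c := by
        rw [bellProj_mulVec, ← hc, hxy, star_add, star_smul]
        simp only [add_dotProduct, dotProduct_smul, smul_dotProduct, smul_eq_mul, hux, hu]
        ring
      have Ekey : star y ⬝ᵥ (M *ᵥ y) =
          (β : ℂ) * (star x ⬝ᵥ x) - star x ⬝ᵥ (Ω *ᵥ x) := by
        rw [hM_def, sub_mulVec, add_mulVec, smul_mulVec, smul_mulVec, one_mulVec,
          dotProduct_sub, dotProduct_add, dotProduct_smul, dotProduct_smul, E1, E2, E3,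
          smul_eq_mul, smul_eq_mul]
        push_cast
        ring
      show 0 ≤ star y ⬝ᵥ M *ᵥ y
      rw [Ekey, Complex.le_def]
      have hQ := hΩpos.dotProduct_mulVec_nonneg x
      have hS := dotProduct_star_self_nonneg x
      rw [Complex.le_def] at hQ hS
      simp only [Complex.zero_re, Complex.zero_im] at hQ hS ⊢
      have hb := hβ x hxu
      constructor
      · simp only [Complex.sub_re, Complex.mul_re, Complex.ofReal_re, Complex.ofReal_im]
        nlinarith [hS.2, hQ.2]
      · simp only [Complex.sub_im, Complex.mul_im, Complex.ofReal_re, Complex.ofReal_im]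
        rw [← hS.2, ← hQ.2]
        ring
    have h0 : 0 ≤ ((M * ρ).trace).re := trace_mul_re_nonneg hMpsd hρ
    have hMtr : (M * ρ).trace =
        (β : ℂ) + ((1 - β : ℝ) : ℂ) * (bellProj d * ρ).trace - (Ω * ρ).trace := by
      rw [hM_def, sub_mul, add_mul, smul_mul_assoc, smul_mul_assoc, one_mul, trace_sub,
        trace_add, trace_smul, trace_smul, hρtr, smul_eq_mul, smul_eq_mul, mul_one]
    rw [hMtr, Complex.sub_re, Complex.add_re, Complex.ofReal_re, Complex.mul_re,
      Complex.ofReal_re, Complex.ofReal_im] at h0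
    nlinarith [mul_le_mul_of_nonneg_left hfid (by linarith : (0:ℝ) ≤ 1 - β)]
  · nlinarith [mul_nonneg (by linarith : (0:ℝ) ≤ β - 1) hε0]
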